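/- Let N ≥ 1, and for each t = 1,...,N let m_t ≤ E_* be a nonnegative integer and (z_{t,j})_{j=1}^{m_t} reals in [0,1] satisfying Π_{t=1}^N Π_{j=1}^{m_t} (1 + z_{t,j}²/σ²) ≤ (1 + N E_*/(d σ²))^{d E_*}. Then Σ_{t=1}^N Σ_{j=1}^{m_t} z_{t,j}² ≤ d E_* log(1 + N E_*/(d σ²)) / log(1 + 1/σ²). -/

import Mathlib

theorem elliptical_potential_bound (N d Estar : ℕ) (hN : 1 ≤ N)
    (hd : 0 < d) (hE : 0 < Estar) (σ : ℝ) (hσ : 0 < σ)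
    (m : Fin N → ℕ) (hm : ∀ t, m t ≤ Estar)
    (z : (t : Fin N) → Fin (m t) → ℝ)
    (hz0 : ∀ t j, 0 ≤ z t j) (hz1 : ∀ t j, z t j ≤ 1)
    (hprod : ∏ t, ∏ j, (1 + z t j ^ 2 / σ ^ 2) ≤
      (1 + N * Estar / (d * σ ^ 2)) ^ (d * Estar)) :
    ∑ t, ∑ j, z t j ^ 2 ≤
      d * Estar * Real.log (1 + N * Estar / (d * σ ^ 2)) / Real.log (1 + 1 / σ ^ 2) := by
  have hσ2 : (0:ℝ) < σ ^ 2 := by positivity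
  have hL : 0 < Real.log (1 + 1 / σ ^ 2) := by
    apply Real.log_pos; nlinarith [one_div_pos.mpr hσ2]
  -- pointwise bound: z² * L ≤ log (1 + z²/σ²)
  have key : ∀ (t : Fin N) (j : Fin (m t)),
      z t j ^ 2 * Real.log (1 + 1 / σ ^ 2) ≤ Real.log (1 + z t j ^ 2 / σ ^ 2) := by
    intro t j
    have hz2 : 0 ≤ z t j ^ 2 := sq_nonneg _
    have hz2' : z t j ^ 2 ≤ 1 := by nlinarith [hz0 t j, hz1 t j]
    have hb := rpow_one_add_le_one_add_mul_self (s := 1 / σ ^ 2)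
      (le_trans (by norm_num) (le_of_lt (by positivity : (0:ℝ) < 1 / σ ^ 2))) hz2 hz2'
    have h1 : (0:ℝ) < 1 + 1 / σ ^ 2 := by positivity
    calc z t j ^ 2 * Real.log (1 + 1 / σ ^ 2)
        = Real.log ((1 + 1 / σ ^ 2) ^ (z t j ^ 2)) := by
          rw [Real.log_rpow h1]
      _ ≤ Real.log (1 + z t j ^ 2 / σ ^ 2) := by
          apply Real.log_le_log (by positivity)
          calc (1 + 1 / σ ^ 2) ^ (z t j ^ 2) ≤ 1 + z t j ^ 2 * (1 / σ ^ 2) := hb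
            _ = 1 + z t j ^ 2 / σ ^ 2 := by ring
  have hpos : ∀ (t : Fin N) (j : Fin (m t)), (0:ℝ) < 1 + z t j ^ 2 / σ ^ 2 := by
    intro t j; positivity
  have hsum : (∑ t, ∑ j, z t j ^ 2) * Real.log (1 + 1 / σ ^ 2)
      ≤ Real.log (∏ t, ∏ j, (1 + z t j ^ 2 / σ ^ 2)) := by
    rw [Real.log_prod (fun t _ => by
      rw [Finset.prod_ne_zero_iff]; exact fun j _ => (hpos t j).ne')]
    rw [Finset.sum_mul]
    apply Finset.sum_le_sum
    intro t _
    rw [Real.log_prod (fun j _ => (hpos t j).ne'), Finset.sum_mul]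
    exact Finset.sum_le_sum fun j _ => key t j
  have hR : (0:ℝ) < 1 + N * Estar / (d * σ ^ 2) := by positivity
  have hlog2 : Real.log (∏ t, ∏ j, (1 + z t j ^ 2 / σ ^ 2))
      ≤ (d * Estar : ℝ) * Real.log (1 + N * Estar / (d * σ ^ 2)) := by
    calc Real.log (∏ t, ∏ j, (1 + z t j ^ 2 / σ ^ 2))
        ≤ Real.log ((1 + N * Estar / (d * σ ^ 2)) ^ (d * Estar)) := by
          apply Real.log_le_log _ hprod
          exact Finset.prod_pos fun t _ => Finset.prod_pos fun j _ => hpos t j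
      _ = (d * Estar : ℝ) * Real.log (1 + N * Estar / (d * σ ^ 2)) := by
          rw [Real.log_pow]; push_cast; ring
  rw [le_div_iff₀ hL]
  exact hsum.trans hlog2
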